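/- Let a, b, D be real numbers with 0 < a < D/2, 0 < b < D/2 and a + b > D/2, and let P > 0. Then ∫_0^∞ ∫_0^∞ x^{a−1} y^{b−1} (x + y)^{−D/2} e^{−P·xy/(x+y)} dx dy = P^{D/2 − a − b} · Γ(a + b − D/2)·Γ(D/2 − a)·Γ(D/2 − b) / Γ(D − a − b). -/

import Mathlib

open MeasureTheory Set

namespace BubbleAux

open Real

lemma gamma_integrable {s r : ℝ} (hs : 0 < s) (hr : 0 < r) :
    IntegrableOn (fun y : ℝ => y ^ (s - 1) * Real.exp (-(r * y))) (Ioi 0) := by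
  have h0 : IntegrableOn (fun t : ℝ => t ^ (s - 1) * Real.exp (-t)) (Ioi 0) := by
    have := Real.GammaIntegral_convergent hs
    exact this.congr_fun (fun x _ => by ring) measurableSet_Ioi
  have h1 : IntegrableOn (fun y : ℝ => (r * y) ^ (s - 1) * Real.exp (-(r * y))) (Ioi 0) := by
    refine (integrableOn_Ioi_comp_mul_left_iff
      (fun t : ℝ => t ^ (s - 1) * Real.exp (-t)) 0 hr).mpr ?_
    simpa using h0
  have h2 : IntegrableOn (fun y : ℝ =>
      ((r : ℝ) ^ (s - 1))⁻¹ * ((r * y) ^ (s - 1) * Real.exp (-(r * y)))) (Ioi 0) :=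
    h1.const_mul _
  refine h2.congr_fun (fun y hy => ?_) measurableSet_Ioi
  have hy : (0:ℝ) < y := hy
  dsimp only
  rw [Real.mul_rpow hr.le hy.le]
  field_simp [(Real.rpow_pos_of_pos hr (s-1)).ne']

lemma beta_Ioo_integrable {u v : ℝ} (hu : 0 < u) (hv : 0 < v) :
    IntegrableOn (fun x : ℝ => x ^ (u - 1) * (1 - x) ^ (v - 1)) (Ioo 0 1) := by
  have h := (Complex.betaIntegral_convergent (u := u) (v := v)
    (by simpa using hu) (by simpa using hv)).1
  have h' : IntegrableOn (fun x : ℝ =>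
      ((x : ℂ) ^ ((u : ℂ) - 1) * (1 - (x : ℂ)) ^ ((v : ℂ) - 1))) (Ioo 0 1) :=
    h.mono_set Ioo_subset_Ioc_self
  have h2 : IntegrableOn (fun x : ℝ =>
      ((x : ℂ) ^ ((u : ℂ) - 1) * (1 - (x : ℂ)) ^ ((v : ℂ) - 1)).re) (Ioo 0 1) := h'.re
  refine h2.congr_fun (fun x hx => ?_) measurableSet_Ioo
  obtain ⟨hx0, hx1⟩ := hx
  have e : ((x : ℂ) ^ ((u : ℂ) - 1) * (1 - (x : ℂ)) ^ ((v : ℂ) - 1))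
      = ((x ^ (u - 1) * (1 - x) ^ (v - 1) : ℝ) : ℂ) := by
    rw [Complex.ofReal_mul, Complex.ofReal_cpow hx0.le, Complex.ofReal_cpow (by linarith)]
    push_cast
    ring
  dsimp only
  rw [e, Complex.ofReal_re]

lemma beta_Ioo {u v : ℝ} (hu : 0 < u) (hv : 0 < v) :
    ∫ x in Ioo (0:ℝ) 1, x ^ (u - 1) * (1 - x) ^ (v - 1)
      = Real.Gamma u * Real.Gamma v / Real.Gamma (u + v) := by
  have key := Complex.Gamma_mul_Gamma_eq_betaIntegral (s := u) (t := v)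
    (by simpa using hu) (by simpa using hv)
  have hB : Complex.betaIntegral u v
      = ∫ x in Ioc (0:ℝ) 1, ((x ^ (u - 1) * (1 - x) ^ (v - 1) : ℝ) : ℂ) := by
    rw [Complex.betaIntegral, intervalIntegral.integral_of_le zero_le_one]
    refine setIntegral_congr_fun measurableSet_Ioc (fun x hx => ?_)
    obtain ⟨hx0, hx1⟩ := hx
    rw [Complex.ofReal_mul, Complex.ofReal_cpow hx0.le, Complex.ofReal_cpow (by linarith)]
    push_cast
    ring
  have hB2 : Complex.betaIntegral u v
      = ((∫ x in Ioc (0:ℝ) 1, x ^ (u - 1) * (1 - x) ^ (v - 1) : ℝ) : ℂ) := by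
    rw [hB]; exact integral_ofReal
  rw [hB2, ← Complex.ofReal_add, Complex.Gamma_ofReal, Complex.Gamma_ofReal,
    Complex.Gamma_ofReal, ← Complex.ofReal_mul, ← Complex.ofReal_mul] at key
  have key2 := Complex.ofReal_inj.mp key
  have hG : Real.Gamma (u + v) ≠ 0 := (Real.Gamma_pos_of_pos (by linarith)).ne'
  rw [← integral_Ioc_eq_integral_Ioo]
  field_simp
  linarith [key2]

lemma hasDeriv_aux {x : ℝ} (hx : x ∈ Ioo (0:ℝ) 1) :
    HasDerivWithinAt (fun x : ℝ => x / (1 - x)) (((1 - x) ^ 2)⁻¹) (Ioo 0 1) x := by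
  have hne : (1 : ℝ) - x ≠ 0 := by rcases hx with ⟨h0, h1⟩; intro h; linarith [h]
  have h : HasDerivAt (fun x : ℝ => x / (1 - x))
      ((1 * (1 - x) - x * (0 - 1)) / ((1 - x) ^ 2)) x :=
    (hasDerivAt_id x).div ((hasDerivAt_const x 1).sub (hasDerivAt_id x)) hne
  have : (1 * (1 - x) - x * (0 - 1)) / ((1 - x) ^ 2) = ((1 - x) ^ 2)⁻¹ := by
    field_simp
    ring
  rw [this] at h
  exact h.hasDerivWithinAt

lemma injOn_aux : InjOn (fun x : ℝ => x / (1 - x)) (Ioo 0 1) := by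
  intro x hx y hy h
  rcases hx with ⟨hx0, hx1⟩
  rcases hy with ⟨hy0, hy1⟩
  have hxne : (1:ℝ) - x ≠ 0 := by intro h'; linarith
  have hyne : (1:ℝ) - y ≠ 0 := by intro h'; linarith
  field_simp at h
  linarith

lemma image_aux : (fun x : ℝ => x / (1 - x)) '' Ioo 0 1 = Ioi 0 := by
  ext t
  simp only [mem_image, mem_Ioo, mem_Ioi]
  constructor
  · rintro ⟨x, ⟨hx0, hx1⟩, rfl⟩
    exact div_pos hx0 (by linarith)
  · intro ht
    have h1t : (0:ℝ) < 1 + t := by linarith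
    refine ⟨t / (1 + t), ⟨div_pos ht h1t, ?_⟩, ?_⟩
    · rw [div_lt_one h1t]; linarith
    · have h1 : (1:ℝ) + t ≠ 0 := h1t.ne'
      field_simp
      ring

lemma pointwise_aux {u v x : ℝ} (hx0 : 0 < x) (hx1 : x < 1) :
    |((1 - x) ^ 2)⁻¹| * ((x / (1 - x)) ^ (u - 1) * (1 + x / (1 - x)) ^ (-(u + v)))
      = x ^ (u - 1) * (1 - x) ^ (v - 1) := by
  have h1x : (0:ℝ) < 1 - x := by linarith
  have e1 : 1 + x / (1 - x) = (1 - x)⁻¹ := by field_simp; ring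
  rw [abs_of_pos (by positivity), e1, Real.div_rpow hx0.le h1x.le,
    Real.inv_rpow h1x.le, ← Real.rpow_neg h1x.le, ← Real.rpow_natCast (1 - x) 2,
    ← Real.rpow_neg h1x.le, div_eq_mul_inv, ← Real.rpow_neg h1x.le]
  rw [mul_assoc (x ^ (u-1)), ← Real.rpow_add h1x, mul_left_comm, ← Real.rpow_add h1x,
    show -((2:ℕ):ℝ) + (-(u - 1) + - -(u + v)) = v - 1 by push_cast; ring]

lemma beta_Ioi_congr (u v : ℝ) :
    ∀ x ∈ Ioo (0:ℝ) 1,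
      |((1 - x) ^ 2)⁻¹| • ((x / (1 - x)) ^ (u - 1) * (1 + x / (1 - x)) ^ (-(u + v)))
        = x ^ (u - 1) * (1 - x) ^ (v - 1) := by
  intro x hx
  rw [smul_eq_mul]
  exact pointwise_aux hx.1 hx.2

lemma beta_Ioi {u v : ℝ} (hu : 0 < u) (hv : 0 < v) :
    ∫ t in Ioi (0:ℝ), t ^ (u - 1) * (1 + t) ^ (-(u + v))
      = Real.Gamma u * Real.Gamma v / Real.Gamma (u + v) := by
  rw [← image_aux, integral_image_eq_integral_abs_deriv_smul measurableSet_Ioo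
    (fun x hx => hasDeriv_aux hx) injOn_aux]
  rw [setIntegral_congr_fun measurableSet_Ioo (beta_Ioi_congr u v)]
  exact beta_Ioo hu hv

lemma beta_Ioi_integrable {u v : ℝ} (hu : 0 < u) (hv : 0 < v) :
    IntegrableOn (fun t : ℝ => t ^ (u - 1) * (1 + t) ^ (-(u + v))) (Ioi 0) := by
  rw [← image_aux, integrableOn_image_iff_integrableOn_abs_deriv_smul measurableSet_Ioo
    (fun x hx => hasDeriv_aux hx) injOn_aux]
  exact (beta_Ioo_integrable hu hv).congr_fun
    (fun x hx => (beta_Ioi_congr u v x hx).symm) measurableSet_Ioo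

variable {a b D P : ℝ}

lemma point2 (hP : 0 < P) {t : ℝ} (ht : 0 < t) :
    t ^ (a - 1) * (1 + t) ^ (-(D / 2)) *
        ((1 / (P * t / (1 + t))) ^ (a + b - D / 2) * Real.Gamma (a + b - D / 2))
      = Real.Gamma (a + b - D / 2) * P ^ (-(a + b - D / 2)) *
          (t ^ (D / 2 - b - 1) * (1 + t) ^ (-(D / 2 - b + (D / 2 - a)))) := by
  have h1t : (0:ℝ) < 1 + t := by linarith
  have e : 1 / (P * t / (1 + t)) = P⁻¹ * t⁻¹ * (1 + t) := by
    field_simp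
  rw [e, Real.mul_rpow (by positivity) h1t.le,
    Real.mul_rpow (by positivity) (by positivity),
    Real.inv_rpow hP.le, Real.inv_rpow ht.le,
    ← Real.rpow_neg hP.le, ← Real.rpow_neg ht.le,
    show t ^ (D / 2 - b - 1) = t ^ (a - 1) * t ^ (-(a + b - D / 2)) by
      rw [← Real.rpow_add ht]; congr 1; ring,
    show (1 + t) ^ (-(D / 2 - b + (D / 2 - a)))
        = (1 + t) ^ (-(D / 2)) * (1 + t) ^ (a + b - D / 2) by
      rw [← Real.rpow_add h1t]; congr 1; ring]
  ring

lemma inner_subst (hP : 0 < P) {y : ℝ} (hy : (0:ℝ) < y) :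
    (∫ x in Ioi (0:ℝ), x ^ (a - 1) * y ^ (b - 1) * (x + y) ^ (-(D / 2)) *
        Real.exp (-P * (x * y) / (x + y)))
      = ∫ t in Ioi (0:ℝ), y ^ (a + b - D / 2 - 1) *
          (t ^ (a - 1) * (1 + t) ^ (-(D / 2)) * Real.exp (-(P * t / (1 + t) * y))) := by
  have key := integral_comp_mul_left_Ioi
    (fun x => x ^ (a - 1) * y ^ (b - 1) * (x + y) ^ (-(D / 2)) *
      Real.exp (-P * (x * y) / (x + y))) 0 hy
  rw [mul_zero, smul_eq_mul] at key
  have e : (∫ x in Ioi (0:ℝ), x ^ (a - 1) * y ^ (b - 1) * (x + y) ^ (-(D / 2)) *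
      Real.exp (-P * (x * y) / (x + y)))
      = y * ∫ t in Ioi (0:ℝ), (y * t) ^ (a - 1) * y ^ (b - 1) * (y * t + y) ^ (-(D / 2)) *
          Real.exp (-P * (y * t * y) / (y * t + y)) := by
    rw [key, ← mul_assoc, mul_inv_cancel₀ hy.ne', one_mul]
  rw [e, ← integral_const_mul]
  refine setIntegral_congr_fun measurableSet_Ioi (fun t ht => ?_)
  have ht : (0:ℝ) < t := ht
  have h1t : (0:ℝ) < 1 + t := by linarith
  have eexp : -P * (y * t * y) / (y * t + y) = -(P * t / (1 + t) * y) := by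
    rw [show y * t + y = y * (1 + t) by ring]
    field_simp
  have hy2 : y ^ (a + b - D / 2 - 1) = y * (y ^ (a - 1) * y ^ (b - 1) * y ^ (-(D / 2))) := by
    rw [← Real.rpow_add hy, ← Real.rpow_add hy,
      show a + b - D / 2 - 1 = 1 + (a - 1 + (b - 1) + -(D / 2)) by ring,
      Real.rpow_add hy, Real.rpow_one]
  rw [eexp, show y * t + y = y * (1 + t) by ring, Real.mul_rpow hy.le ht.le,
    Real.mul_rpow hy.le h1t.le, hy2]
  ring

lemma y_integral (ha0 : 0 < a) (hb0 : 0 < b) (hab : D / 2 < a + b) (hP : 0 < P)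
    {t : ℝ} (ht : 0 < t) :
    (∫ y in Ioi (0:ℝ), y ^ (a + b - D / 2 - 1) *
        (t ^ (a - 1) * (1 + t) ^ (-(D / 2)) * Real.exp (-(P * t / (1 + t) * y))))
      = Real.Gamma (a + b - D / 2) * P ^ (-(a + b - D / 2)) *
          (t ^ (D / 2 - b - 1) * (1 + t) ^ (-(D / 2 - b + (D / 2 - a)))) := by
  have hs : 0 < a + b - D / 2 := by linarith
  have h1t : (0:ℝ) < 1 + t := by linarith
  have hr : 0 < P * t / (1 + t) := div_pos (mul_pos hP ht) h1t
  calc (∫ y in Ioi (0:ℝ), y ^ (a + b - D / 2 - 1) *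
        (t ^ (a - 1) * (1 + t) ^ (-(D / 2)) * Real.exp (-(P * t / (1 + t) * y))))
      = ∫ y in Ioi (0:ℝ), (t ^ (a - 1) * (1 + t) ^ (-(D / 2))) *
          (y ^ (a + b - D / 2 - 1) * Real.exp (-(P * t / (1 + t) * y))) :=
        setIntegral_congr_fun measurableSet_Ioi (fun y _ => by ring)
    _ = (t ^ (a - 1) * (1 + t) ^ (-(D / 2))) *
          ∫ y in Ioi (0:ℝ), y ^ (a + b - D / 2 - 1) * Real.exp (-(P * t / (1 + t) * y)) :=
        integral_const_mul _ _
    _ = t ^ (a - 1) * (1 + t) ^ (-(D / 2)) *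
          ((1 / (P * t / (1 + t))) ^ (a + b - D / 2) * Real.Gamma (a + b - D / 2)) := by
        rw [integral_rpow_mul_exp_neg_mul_Ioi hs hr]
    _ = _ := point2 hP ht

end BubbleAux

open BubbleAux in
/-- The Schwinger-parametrized massless one-loop bubble integral. -/
theorem bubble_diagram_integral (a b D P : ℝ)
    (ha0 : 0 < a) (haD : a < D / 2) (hb0 : 0 < b) (hbD : b < D / 2)
    (hab : D / 2 < a + b) (hP : 0 < P) :
    ∫ y : ℝ in Ioi 0, ∫ x : ℝ in Ioi 0,
        x ^ (a - 1) * y ^ (b - 1) * (x + y) ^ (-(D / 2)) *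
          Real.exp (-P * (x * y) / (x + y))
      = P ^ (D / 2 - a - b) *
          (Real.Gamma (a + b - D / 2) * Real.Gamma (D / 2 - a) * Real.Gamma (D / 2 - b) /
            Real.Gamma (D - a - b)) := by
  have hs : 0 < a + b - D / 2 := by linarith
  have hu : 0 < D / 2 - b := by linarith
  have hv : 0 < D / 2 - a := by linarith
  -- Step 1: substitute x = y t in the inner integral
  rw [setIntegral_congr_fun measurableSet_Ioi (fun y hy => inner_subst hP hy)]
  -- Step 2: Fubini
  set F : ℝ → ℝ → ℝ := fun y t => y ^ (a + b - D / 2 - 1) *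
      (t ^ (a - 1) * (1 + t) ^ (-(D / 2)) * Real.exp (-(P * t / (1 + t) * y))) with hF
  have mF : Measurable (Function.uncurry F) := by
    apply Measurable.mul
    · exact measurable_fst.pow_const _
    · refine Measurable.mul (Measurable.mul ?_ ?_) ?_
      · exact measurable_snd.pow_const _
      · exact (measurable_const.add measurable_snd).pow_const _
      · exact Real.measurable_exp.comp
          ((((measurable_const.mul measurable_snd).div
            (measurable_const.add measurable_snd)).mul measurable_fst).neg)
  have hint : Integrable (Function.uncurry F)
      ((volume.restrict (Ioi 0)).prod (volume.restrict (Ioi 0))) := by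
    rw [integrable_prod_iff' mF.aestronglyMeasurable]
    constructor
    · filter_upwards [self_mem_ae_restrict measurableSet_Ioi] with t ht
      have ht : (0:ℝ) < t := ht
      have h1t : (0:ℝ) < 1 + t := by linarith
      have hr : 0 < P * t / (1 + t) := div_pos (mul_pos hP ht) h1t
      have base : IntegrableOn (fun y : ℝ => (t ^ (a - 1) * (1 + t) ^ (-(D / 2))) *
          (y ^ (a + b - D / 2 - 1) * Real.exp (-(P * t / (1 + t) * y)))) (Ioi 0) :=
        (gamma_integrable hs hr).const_mul _
      refine base.congr_fun (fun y _ => ?_) measurableSet_Ioi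
      simp only [hF, Function.uncurry]
      ring
    · have G_int : IntegrableOn (fun t : ℝ =>
          Real.Gamma (a + b - D / 2) * P ^ (-(a + b - D / 2)) *
            (t ^ (D / 2 - b - 1) * (1 + t) ^ (-(D / 2 - b + (D / 2 - a))))) (Ioi 0) := by
        exact (beta_Ioi_integrable hu hv).const_mul _
      refine G_int.congr ?_
      filter_upwards [self_mem_ae_restrict measurableSet_Ioi] with t ht
      have ht : (0:ℝ) < t := ht
      have h1t : (0:ℝ) < 1 + t := by linarith
      have hnorm : ∀ y ∈ Ioi (0:ℝ), ‖Function.uncurry F (y, t)‖ = F y t := by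
        intro y hy
        have hy : (0:ℝ) < y := hy
        have hnn : 0 ≤ F y t := by
          simp only [hF]
          positivity
        simp only [Function.uncurry, Real.norm_eq_abs, abs_of_nonneg hnn]
      rw [setIntegral_congr_fun measurableSet_Ioi hnorm]
      exact (y_integral ha0 hb0 hab hP ht).symm
  have swap := integral_integral_swap hint
  rw [swap]
  -- Step 3: evaluate the y-integral for each t
  rw [setIntegral_congr_fun measurableSet_Ioi
    (fun t ht => y_integral (a := a) (b := b) (D := D) ha0 hb0 hab hP ht)]
  rw [integral_const_mul, beta_Ioi hu hv]
  rw [show -(a + b - D / 2) = D / 2 - a - b by ring,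
    show D / 2 - b + (D / 2 - a) = D - a - b by ring]
  ring
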